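/- Let (R,m) be a Noetherian local commutative ring of prime characteristic p with depth R = 0, and let c(R) be the smallest positive integer s such that the socle (0:m)_R is not contained in m^s. Let r be an integer with p^r > c(R). If L_• is a chain complex of finitely generated free R-modules, indexed by the natural numbers, whose differentials d satisfy d(L_{n+1}) ⊆ m·L_n for all n, then for every j, the j-th homology of the complex L_• ⊗_R ^{φ^r}R vanishes if and only if L_j = 0. -/

import Mathlib

open CategoryTheory

universe u

/-- `R` viewed as a module over itself by restriction of scalars along a ring
endomorphism `f : R →+* R` (here `f` will be the `r`-th Frobenius power `a ↦ a ^ p ^ r`),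
i.e. the module `^{φ^r}R` with action `a · b = f a * b = a ^ p ^ r * b`. -/
noncomputable abbrev frobMod {R : Type u} [CommRing R] (f : R →+* R) : ModuleCat.{u} R :=
  (ModuleCat.restrictScalars f).obj (ModuleCat.of R R)

/-- The depth of a commutative ring `R` with respect to an ideal `I` (take `I = m`):
the supremum of lengths of `R`-regular sequences contained in `I`. -/
noncomputable def depthWrt (R : Type u) [CommRing R] (I : Ideal R) : ℕ∞ :=
  sSup {n : ℕ∞ | ∃ rs : List R, (∀ y ∈ rs, y ∈ I) ∧
    RingTheory.Sequence.IsRegular R rs ∧ (rs.length : ℕ∞) = n}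

/-- Let `(R, m)` be a Noetherian local commutative ring of prime
characteristic `p` with `depth R = 0`, let `c = c(R)` be the smallest positive integer `s`
such that the socle `(0 : m)_R` is not contained in `m^s`, and let `r` satisfy `p^r > c(R)`.
If `L_•` is a chain complex of finitely generated free `R`-modules whose differentials
satisfy `d(L_{n+1}) ⊆ m • L_n`, then for every `j` the `j`-th homology of
`L_• ⊗_R ^{φ^r}R` vanishes iff `L_j = 0`. -/
theorem stmt3 {R : Type u} [CommRing R] [IsNoetherianRing R] [IsLocalRing R]
    (p : ℕ) (hp : p.Prime) [CharP R p]
    (hdepth : depthWrt R (IsLocalRing.maximalIdeal R) = 0)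
    (c : ℕ) (hc0 : 0 < c)
    (hc : ¬ ((IsLocalRing.maximalIdeal R).annihilator ≤ IsLocalRing.maximalIdeal R ^ c))
    (hcmin : ∀ s : ℕ, 0 < s → s < c →
      (IsLocalRing.maximalIdeal R).annihilator ≤ IsLocalRing.maximalIdeal R ^ s)
    (r : ℕ) (hr : c < p ^ r) (f : R →+* R) (hf : ∀ a, f a = a ^ p ^ r)
    (L : ChainComplex (ModuleCat.{u} R) ℕ)
    (hfree : ∀ n, Module.Free R (L.X n)) (hfg : ∀ n, Module.Finite R (L.X n))
    (hmin : ∀ n, LinearMap.range (L.d (n + 1) n).hom ≤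
      IsLocalRing.maximalIdeal R • (⊤ : Submodule R (L.X n)))
    (j : ℕ) :
    Subsingleton
        ((((MonoidalCategory.tensorRight (frobMod f)).mapHomologicalComplex
          (ComplexShape.down ℕ)).obj L).homology j)
      ↔ Subsingleton (L.X j) := by
  classical
  set m : Ideal R := IsLocalRing.maximalIdeal R with hm
  have hcle : c ≤ p ^ r := hr.le
  set M : ModuleCat.{u} R := frobMod f with hMdef
  letI : Module R M := M.isModule
  set L' : ChainComplex (ModuleCat.{u} R) ℕ :=
    ((MonoidalCategory.tensorRight M).mapHomologicalComplex (ComplexShape.down ℕ)).obj L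
    with hL'def
  set K : ℕ := (ComplexShape.down ℕ).next j with hKdef
  have hexact_iff : L'.ExactAt j ↔ (L'.sc' (j + 1) j K).Exact :=
    L'.exactAt_iff' (j + 1) j K (ChainComplex.prev ℕ j) hKdef.symm
  have hss_iff : Subsingleton (L'.homology j) ↔ L'.ExactAt j := by
    rw [HomologicalComplex.exactAt_iff_isZero_homology]
    constructor
    · intro h
      exact @ModuleCat.isZero_of_subsingleton _ _ _ h
    · intro h
      refine subsingleton_of_forall_eq 0 fun x => ?_
      have h0 : 𝟙 (L'.homology j) = 0 := h.eq_of_src _ _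
      calc x = (𝟙 (L'.homology j) : L'.homology j ⟶ L'.homology j) x := rfl
        _ = (0 : L'.homology j ⟶ L'.homology j) x := by rw [h0]
        _ = 0 := rfl
  rw [hss_iff, hexact_iff, ShortComplex.moduleCat_exact_iff]
  -- the ranges of all differentials of `L` are contained in `m • ⊤`
  have hdrange : ∀ i' j' : ℕ, LinearMap.range (L.d i' j').hom ≤ m • (⊤ : Submodule R (L.X j')) := by
    intro i' j'
    by_cases hrel : (ComplexShape.down ℕ).Rel i' j'
    · have h : j' + 1 = i' := hrel
      obtain rfl : i' = j' + 1 := h.symm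
      exact hmin j'
    · rw [L.shape i' j' hrel]
      rintro x ⟨y, rfl⟩
      have : (0 : L.X i' ⟶ L.X j') y = 0 := rfl
      rw [this]
      exact Submodule.zero_mem _
  -- a socle element `u ∉ m ^ c`
  obtain ⟨u, hu_ann, hu_not⟩ := SetLike.not_le_iff_exists.mp hc
  have hann : ∀ a ∈ m, a * u = 0 := fun a ha => by
    have := Submodule.mem_annihilator.mp hu_ann a ha
    rwa [smul_eq_mul, mul_comm] at this
  have hprpos : 0 < p ^ r := pow_pos hp.pos r
  have hfu : ∀ a ∈ m, f a * u = 0 := fun a ha => by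
    obtain ⟨t, ht⟩ : ∃ t, p ^ r = t + 1 := ⟨p ^ r - 1, by omega⟩
    rw [hf, ht, pow_succ, mul_assoc, hann a ha, mul_zero]
  have tmul_u_zero : ∀ (N : ModuleCat.{u} R) (x : N), x ∈ m • (⊤ : Submodule R N) →
      (x ⊗ₜ[R] (show M from u) : TensorProduct R N M) = 0 := by
    intro N x hx
    refine Submodule.smul_induction_on hx ?_ ?_
    · intro a ha z _
      rw [TensorProduct.smul_tmul a z _]
      have h2 : (a • (show M from u)) = (0 : M) := by
        show f a * u = 0
        exact hfu a ha
      rw [h2, TensorProduct.tmul_zero]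
    · intro x y hx hy
      rw [TensorProduct.add_tmul, hx, hy, add_zero]
  constructor
  · -- homology vanishes → L.X j trivial
    intro hexact
    by_contra hns
    rw [not_subsingleton_iff_nontrivial] at hns
    haveI := hfree j
    haveI : Nontrivial (L.X j) := hns
    let b := Module.Free.chooseBasis R (L.X j)
    obtain ⟨i0⟩ := b.index_nonempty
    let x₀ : ((L'.sc' (j + 1) j K).X₂) := (b i0) ⊗ₜ[R] (show M from u)
    have hg : (L'.sc' (j + 1) j K).g x₀ = 0 :=
      tmul_u_zero (L.X K) _ (hdrange j K ⟨b i0, rfl⟩)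
    obtain ⟨y, hy⟩ := hexact x₀ hg
    -- the functional `T`
    letI : Module R (M →ₗ[R] M) := LinearMap.module
    let Bil : (L.X j) →ₗ[R] M →ₗ[R] M :=
      { toFun := fun x =>
          { toFun := fun w => (show M from f (b.coord i0 x) * (show R from w))
            map_add' := fun w₁ w₂ => by
              show f (b.coord i0 x) * ((show R from w₁) + (show R from w₂)) =
                f (b.coord i0 x) * (show R from w₁) + f (b.coord i0 x) * (show R from w₂)
              ring
            map_smul' := fun a w => by
              show f (b.coord i0 x) * (f a * (show R from w)) =
                f a * (f (b.coord i0 x) * (show R from w))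
              ring }
        map_add' := fun x₁ x₂ => by
          refine LinearMap.ext fun w => ?_
          show f (b.coord i0 (x₁ + x₂)) * (show R from w) =
            f (b.coord i0 x₁) * (show R from w) + f (b.coord i0 x₂) * (show R from w)
          rw [map_add, map_add, add_mul]
        map_smul' := fun a x => by
          refine LinearMap.ext fun w => ?_
          show f (b.coord i0 (a • x)) * (show R from w) =
            f a * (f (b.coord i0 x) * (show R from w))
          rw [map_smul, smul_eq_mul, map_mul, mul_assoc] }
    let T : TensorProduct R (L.X j) M →ₗ[R] M := TensorProduct.lift Bil
    have hT0 : T x₀ = (show M from u) := by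
      show (show M from f (b.coord i0 (b i0)) * u) = (show M from u)
      have h1 : b.coord i0 (b i0) = 1 := by
        simp [Module.Basis.coord_apply, Module.Basis.repr_self]
      show f (b.coord i0 (b i0)) * u = u
      rw [h1, map_one, one_mul]
    have hbound : ∀ z : ((L'.sc' (j + 1) j K).X₁),
        (show R from T ((L'.sc' (j + 1) j K).f z)) ∈ m ^ c := by
      intro z
      have : ∀ z' : TensorProduct R (L.X (j + 1)) M,
          (show R from T (((MonoidalCategory.tensorRight M).map (L.d (j + 1) j)) z')) ∈ m ^ c := by
        intro z'
        induction z' using TensorProduct.induction_on with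
        | zero =>
          rw [map_zero, map_zero]
          exact Submodule.zero_mem _
        | tmul x w =>
          have h1 : b.coord i0 (L.d (j + 1) j x) ∈ m := by
            have hx : L.d (j + 1) j x ∈ m • (⊤ : Submodule R (L.X j)) :=
              hdrange (j + 1) j ⟨x, rfl⟩
            have hmap : Submodule.map (b.coord i0) (m • (⊤ : Submodule R (L.X j))) ≤ m := by
              rw [Submodule.map_smul'']
              refine Submodule.smul_le.mpr fun a ha v _ => ?_
              rw [smul_eq_mul]
              exact Ideal.mul_mem_right v m ha
            exact hmap ⟨_, hx, rfl⟩
          have h2 : f (b.coord i0 (L.d (j + 1) j x)) ∈ m ^ c := by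
            rw [hf]
            exact Ideal.pow_le_pow_right hcle (Ideal.pow_mem_pow h1 _)
          exact Ideal.mul_mem_right (show R from w) _ h2
        | add z₁ z₂ h₁ h₂ =>
          rw [map_add, map_add]
          exact Submodule.add_mem _ h₁ h₂
      exact this z
    have hfinal : u ∈ m ^ c := by
      have h := hbound y
      rw [hy, hT0] at h
      exact h
    exact hu_not hfinal
  · -- L.X j trivial → homology vanishes
    intro hsub
    haveI hTP : Subsingleton (TensorProduct R (L.X j) M) := by
      refine subsingleton_of_forall_eq 0 fun t => ?_
      induction t using TensorProduct.induction_on with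
      | zero => rfl
      | tmul x w => rw [Subsingleton.elim x 0, TensorProduct.zero_tmul]
      | add a b ha hb => rw [ha, hb, add_zero]
    intro x₂ _
    refine ⟨0, ?_⟩
    rw [map_zero]
    exact (@Subsingleton.elim (TensorProduct R (L.X j) M) hTP _ _ :)
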